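/- Let u(x) = log( Σ_{i=1}^{k} t_i (1 + λ² d(x,x_i)²)^{-2} ) where t_i ≥ 0, Σ t_i = 1, λ > 0, and d is the distance on a Riemannian manifold M with |∇ d²(·, x_i)| ≤ 2 d(·, x_i). Then |∇u(x)| ≤ 4 / min_{i=1,...,k} d(x, x_i) for every x with min_i d(x,x_i) > 0. -/

import Mathlib

open Finset

set_option maxHeartbeats 1000000 in
/-- Gradient estimate (gr2) for the bubble test functions: the gradient of the
logarithm of the sum of bubbles is bounded by `4 / min_i d(x, x_i)`. -/
theorem bubble_gradient_estimate_dmin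
    (k : ℕ) (t : Fin (k + 1) → ℝ) (ht : ∀ i, 0 ≤ t i) (hsum : ∑ i, t i = 1)
    (lam : ℝ) (hlam : 0 < lam)
    (p : Fin (k + 1) → EuclideanSpace ℝ (Fin 2))
    (u : EuclideanSpace ℝ (Fin 2) → ℝ)
    (hu : ∀ y, u y = Real.log (∑ i, t i * ((1 + lam ^ 2 * dist y (p i) ^ 2) ^ 2)⁻¹))
    (x : EuclideanSpace ℝ (Fin 2))
    (hx : 0 < (univ : Finset (Fin (k + 1))).inf' univ_nonempty (fun i => dist x (p i))) :
    ‖fderiv ℝ u x‖ ≤ 4 / (univ : Finset (Fin (k + 1))).inf' univ_nonempty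
      (fun i => dist x (p i)) := by
  classical
  set m := (univ : Finset (Fin (k + 1))).inf' univ_nonempty (fun i => dist x (p i)) with hm
  have hdm : ∀ i, m ≤ dist x (p i) := fun i => inf'_le _ (mem_univ i)
  have hdpos : ∀ i, 0 < dist x (p i) := fun i => lt_of_lt_of_le hx (hdm i)
  -- notation
  set S : EuclideanSpace ℝ (Fin 2) → ℝ :=
    fun y => ∑ i, t i * ((1 + lam ^ 2 * dist y (p i) ^ 2) ^ 2)⁻¹ with hS
  have hA1 : ∀ i, 1 ≤ 1 + lam ^ 2 * dist x (p i) ^ 2 := fun i => by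
    have : (0:ℝ) ≤ lam ^ 2 * dist x (p i) ^ 2 := by positivity
    linarith
  have hApos : ∀ i, (0:ℝ) < 1 + lam ^ 2 * dist x (p i) ^ 2 :=
    fun i => lt_of_lt_of_le one_pos (hA1 i)
  -- derivative of the squared distance
  have hri : ∀ i, HasFDerivAt (fun y => dist y (p i) ^ 2)
      ((2:ℝ) • (innerSL ℝ (x - p i))) x := by
    intro i
    have hsub : HasFDerivAt (fun y : EuclideanSpace ℝ (Fin 2) => y - p i)
        (ContinuousLinearMap.id ℝ _) x := (hasFDerivAt_id x).sub_const _
    have h1 := hsub.inner ℝ hsub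
    have hfun : (fun y : EuclideanSpace ℝ (Fin 2) =>
        (inner ℝ (y - p i) (y - p i) : ℝ)) = fun y => dist y (p i) ^ 2 := by
      funext y
      rw [real_inner_self_eq_norm_sq, dist_eq_norm]
    rw [hfun] at h1
    have hD : ((fderivInnerCLM ℝ (x - p i, x - p i)).comp
        ((ContinuousLinearMap.id ℝ (EuclideanSpace ℝ (Fin 2))).prod
          (ContinuousLinearMap.id ℝ (EuclideanSpace ℝ (Fin 2)))))
        = (2:ℝ) • (innerSL ℝ (x - p i)) := by
      ext v
      simp [fderivInnerCLM_apply, real_inner_comm, two_smul]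
      rw [inner_sub_right, real_inner_comm x v]
    rwa [hD] at h1
  -- derivative of each bubble
  have hgi : ∀ i, HasFDerivAt (fun y => ((1 + lam ^ 2 * dist y (p i) ^ 2) ^ 2)⁻¹)
      ((-(2 * (1 + lam ^ 2 * dist x (p i) ^ 2) * lam ^ 2) /
        ((1 + lam ^ 2 * dist x (p i) ^ 2) ^ 2) ^ 2) •
        ((2:ℝ) • innerSL ℝ (x - p i))) x := by
    intro i
    have h1 : HasDerivAt (fun s : ℝ => 1 + lam ^ 2 * s) (lam ^ 2)
        (dist x (p i) ^ 2) := by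
      simpa using ((hasDerivAt_id (dist x (p i) ^ 2)).const_mul (lam ^ 2)).const_add 1
    have h2 := (h1.fun_pow 2).fun_inv (by positivity)
    have h3 := h2.comp_hasFDerivAt x (hri i)
    refine h3.congr_fderiv ?_
    congr 1
    push_cast
    ring
  set G : Fin (k + 1) → (EuclideanSpace ℝ (Fin 2) →L[ℝ] ℝ) := fun i =>
    (-(2 * (1 + lam ^ 2 * dist x (p i) ^ 2) * lam ^ 2) /
      ((1 + lam ^ 2 * dist x (p i) ^ 2) ^ 2) ^ 2) •
      ((2:ℝ) • innerSL ℝ (x - p i)) with hG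
  have hDS : HasFDerivAt S (∑ i, t i • G i) x :=
    HasFDerivAt.fun_sum fun i _ => (hgi i).const_mul (t i)
  -- positivity of S x
  obtain ⟨j, hj⟩ : ∃ j, 0 < t j := by
    by_contra h
    push_neg at h
    have : ∑ i, t i = 0 :=
      Finset.sum_eq_zero fun i _ => le_antisymm (h i) (ht i)
    rw [this] at hsum
    norm_num at hsum
  have hSx : 0 < S x := by
    have hj' : 0 < t j * ((1 + lam ^ 2 * dist x (p j) ^ 2) ^ 2)⁻¹ :=
      mul_pos hj (by positivity)
    refine lt_of_lt_of_le hj' ?_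
    exact Finset.single_le_sum
      (f := fun i => t i * ((1 + lam ^ 2 * dist x (p i) ^ 2) ^ 2)⁻¹)
      (fun i _ => mul_nonneg (ht i) (by positivity)) (mem_univ j)
  -- per-term bound
  have hper : ∀ i, ‖t i • G i‖ ≤
      4 / m * (t i * ((1 + lam ^ 2 * dist x (p i) ^ 2) ^ 2)⁻¹) := by
    intro i
    set a := 1 + lam ^ 2 * dist x (p i) ^ 2 with ha
    have hapos : 0 < a := hApos i
    have hdx : 0 < dist x (p i) := hdpos i
    have hnorm : ‖G i‖ = 2 * a * lam ^ 2 / (a ^ 2) ^ 2 * (2 * dist x (p i)) := by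
      rw [show G i = (-(2 * a * lam ^ 2) / (a ^ 2) ^ 2) • ((2:ℝ) • innerSL ℝ (x - p i))
        from rfl]
      rw [norm_smul (-(2 * a * lam ^ 2) / (a ^ 2) ^ 2) ((2:ℝ) • innerSL ℝ (x - p i)),
        norm_smul (2:ℝ) (innerSL ℝ (x - p i)), innerSL_apply_norm, Real.norm_eq_abs,
        Real.norm_eq_abs, abs_div, abs_neg, abs_of_nonneg (by positivity : (0:ℝ) ≤ 2 * a * lam ^ 2),
        abs_of_nonneg (by positivity : (0:ℝ) ≤ (a ^ 2) ^ 2),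
        abs_of_nonneg (by norm_num : (0:ℝ) ≤ 2), ← dist_eq_norm]
    rw [norm_smul (t i) (G i), Real.norm_eq_abs, abs_of_nonneg (ht i), hnorm]
    have hG2 : 2 * a * lam ^ 2 / (a ^ 2) ^ 2 * (2 * dist x (p i)) ≤ 4 / m * (a ^ 2)⁻¹ := by
      have key : lam ^ 2 * dist x (p i) * m ≤ a := by
        have h0 : lam ^ 2 * dist x (p i) * m ≤ lam ^ 2 * dist x (p i) * dist x (p i) :=
          mul_le_mul_of_nonneg_left (hdm i) (by positivity)
        have h1 : lam ^ 2 * dist x (p i) * dist x (p i) = lam ^ 2 * dist x (p i) ^ 2 := by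
          ring
        rw [h1] at h0
        linarith
      have hL : 2 * a * lam ^ 2 / (a ^ 2) ^ 2 * (2 * dist x (p i))
          = 4 * lam ^ 2 * dist x (p i) * a / (a ^ 2) ^ 2 := by ring
      have hR : 4 / m * (a ^ 2)⁻¹ = 4 / (m * a ^ 2) := by
        field_simp
      rw [hL, hR, div_le_div_iff₀ (by positivity) (by positivity)]
      calc 4 * lam ^ 2 * dist x (p i) * a * (m * a ^ 2)
          = lam ^ 2 * dist x (p i) * m * (4 * a ^ 3) := by ring
        _ ≤ a * (4 * a ^ 3) :=
            mul_le_mul_of_nonneg_right key (by positivity)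
        _ = 4 * (a ^ 2) ^ 2 := by ring
    calc t i * (2 * a * lam ^ 2 / (a ^ 2) ^ 2 * (2 * dist x (p i)))
        ≤ t i * (4 / m * (a ^ 2)⁻¹) := mul_le_mul_of_nonneg_left hG2 (ht i)
      _ = 4 / m * (t i * (a ^ 2)⁻¹) := by ring
  -- bound the norm of the derivative of S
  have hDSnorm : ‖∑ i, t i • G i‖ ≤ 4 / m * S x := by
    calc ‖∑ i, t i • G i‖ ≤ ∑ i, ‖t i • G i‖ := norm_sum_le _ _
      _ ≤ ∑ i, 4 / m * (t i * ((1 + lam ^ 2 * dist x (p i) ^ 2) ^ 2)⁻¹) :=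
          Finset.sum_le_sum fun i _ => hper i
      _ = 4 / m * S x := by rw [← Finset.mul_sum]
  -- the logarithm
  have hlog : HasFDerivAt (fun y => Real.log (S y)) ((S x)⁻¹ • ∑ i, t i • G i) x :=
    hDS.log hSx.ne'
  have hu' : u = fun y => Real.log (S y) := funext hu
  rw [hu', hlog.fderiv, norm_smul, Real.norm_eq_abs, abs_of_pos (inv_pos.mpr hSx)]
  calc (S x)⁻¹ * ‖∑ i, t i • G i‖ ≤ (S x)⁻¹ * (4 / m * S x) :=
        mul_le_mul_of_nonneg_left hDSnorm (le_of_lt (inv_pos.mpr hSx))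
    _ = 4 / m := by field_simp
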